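/- Let L ∈ ℝ^{k×n} have rank k, be in reduced row echelon form, and have rows with pairwise disjoint supports. Suppose there exists W ∈ ℝ_{≥0}^{k×n} with all entries non-negative, rank k, rows with pairwise disjoint supports, and rowspan(W) = rowspan(L). Then all entries of L are non-negative, i.e., L is itself a proper matrix. -/

import Mathlib

/-- Row space of a matrix: the span of its rows. -/
def rowspan {k n : ℕ} (M : Matrix (Fin k) (Fin n) ℝ) : Submodule ℝ (Fin n → ℝ) :=
  Submodule.span ℝ (Set.range M)

theorem rref_with_nonneg_witness_is_nonneg {k n : ℕ}
    (L : Matrix (Fin k) (Fin n) ℝ) (hrank : L.rank = k)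
    (hrref : ∀ r : Fin k, ∃ i : Fin n,
      (fun r' : Fin k => L r' i) = fun r' : Fin k => if r' = r then (1 : ℝ) else 0)
    (hLdisj : ∀ r r' : Fin k, r ≠ r' → ∀ i, L r i ≠ 0 → L r' i = 0)
    (hW : ∃ W : Matrix (Fin k) (Fin n) ℝ,
      (∀ r i, 0 ≤ W r i) ∧ W.rank = k ∧
      (∀ r r' : Fin k, r ≠ r' → ∀ i, W r i ≠ 0 → W r' i = 0) ∧
      rowspan W = rowspan L) :
    ∀ r i, 0 ≤ L r i := by
  obtain ⟨W, hWpos, -, hWdisj, hspan⟩ := hW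
  intro r i
  have hLr : L r ∈ rowspan W := by
    rw [hspan]; exact Submodule.subset_span ⟨r, rfl⟩
  rw [rowspan] at hLr; replace hLr := (Submodule.mem_span_range_iff_exists_fun (R := ℝ)).mp hLr
  obtain ⟨c, hc⟩ := hLr
  have hLsum : ∀ j, L r j = ∑ s, c s * W s j := by
    intro j; rw [← hc]; simp [Finset.sum_apply]
  rw [hLsum i]
  apply Finset.sum_nonneg
  intro s _
  rcases eq_or_ne (W s i) 0 with h0 | h0
  · simp [h0]
  have hWs : W s ∈ rowspan L := by
    rw [← hspan]; exact Submodule.subset_span ⟨s, rfl⟩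
  rw [rowspan] at hWs; replace hWs := (Submodule.mem_span_range_iff_exists_fun (R := ℝ)).mp hWs
  obtain ⟨d, hd⟩ := hWs
  have hWsj : ∀ j, W s j = ∑ t, d t * L t j := by
    intro j; rw [← hd]; simp [Finset.sum_apply]
  obtain ⟨t, ht⟩ : ∃ t, d t * L t i ≠ 0 := by
    by_contra h
    push_neg at h
    exact h0 (by rw [hWsj i]; exact Finset.sum_eq_zero fun t _ => h t)
  have hdt : d t ≠ 0 := fun h => ht (by simp [h])
  obtain ⟨j, hj⟩ := hrref t
  have hLj : ∀ r', L r' j = if r' = t then 1 else 0 := fun r' => congrFun hj r'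
  have hWsit : W s j = d t := by
    rw [hWsj j, Finset.sum_eq_single t]
    · simp [hLj t]
    · intro b _ hb; simp [hLj b, hb]
    · simp
  have hWsitpos : 0 < W s j :=
    lt_of_le_of_ne (hWpos s j) (by rw [hWsit]; exact Ne.symm hdt)
  have hLrj : L r j = c s * W s j := by
    rw [hLsum j, Finset.sum_eq_single s]
    · intro b _ hb
      have : W b j = 0 := hWdisj s b (Ne.symm hb) j (ne_of_gt hWsitpos)
      simp [this]
    · simp
  have hcs : 0 ≤ c s := by
    have h1 : 0 ≤ L r j := by rw [hLj r]; split <;> norm_num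
    rw [hLrj] at h1
    nlinarith [hWsitpos]
  exact mul_nonneg hcs (hWpos s i)
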